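/- For a formal power series F(t) = Σ_{n≥0} t^n/(tq;q)_n with |q|<1 (treated formally in t and q), one has (1−t)F(t) = 1 + (t²q/(1−tq)²)·(1−tq)F(tq), equivalently R(t) = 1 + (t²q/(1−tq)²)R(tq) where R(t) = (1−t)F(t). -/

import Mathlib

open PowerSeries Finset

section Psum

variable {R : Type*} [CommRing R]

noncomputable def psum (a : ℕ → PowerSeries R) : PowerSeries R :=
  PowerSeries.mk fun m => ∑ n ∈ Finset.range (m + 1), PowerSeries.coeff (R := R) m (a n)

lemma coeff_psum (a : ℕ → PowerSeries R) (h : ∀ n, (X : PowerSeries R) ^ n ∣ a n)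
    {m N : ℕ} (hm : m < N) :
    coeff (R := R) m (psum a) = ∑ n ∈ Finset.range N, coeff (R := R) m (a n) := by
  rw [psum, coeff_mk]
  refine Finset.sum_subset (Finset.range_subset_range.2 hm) ?_
  intro n _ hn'
  simp only [Finset.mem_range, not_lt] at hn'
  exact X_pow_dvd_iff.mp (h n) m (by omega)

lemma psum_add (a b : ℕ → PowerSeries R) :
    psum (fun n => a n + b n) = psum a + psum b := by
  ext m
  simp [psum, Finset.sum_add_distrib]

lemma mul_psum (g : PowerSeries R) (a : ℕ → PowerSeries R)
    (h : ∀ n, (X : PowerSeries R) ^ n ∣ a n) :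
    g * psum a = psum (fun n => g * a n) := by
  ext m
  have hL : coeff (R := R) m (g * psum a)
      = ∑ p ∈ antidiagonal m, ∑ n ∈ Finset.range (m + 1),
          coeff (R := R) p.1 g * coeff (R := R) p.2 (a n) := by
    rw [coeff_mul]
    refine Finset.sum_congr rfl fun p hp => ?_
    have hp2 : p.2 ≤ m := by
      have := Finset.HasAntidiagonal.mem_antidiagonal.mp hp; omega
    rw [coeff_psum a h (Nat.lt_succ_of_le hp2), Finset.mul_sum]
  have hR : coeff (R := R) m (psum (fun n => g * a n))
      = ∑ n ∈ Finset.range (m + 1), ∑ p ∈ antidiagonal m,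
          coeff (R := R) p.1 g * coeff (R := R) p.2 (a n) := by
    rw [psum, coeff_mk]
    exact Finset.sum_congr rfl fun n _ => coeff_mul m g (a n)
  rw [hL, hR, Finset.sum_comm]

lemma psum_shift (a : ℕ → PowerSeries R) (h : ∀ n, (X : PowerSeries R) ^ n ∣ a n) :
    psum a = a 0 + psum (fun n => a (n + 1)) := by
  ext m
  rw [map_add, psum, psum, coeff_mk, coeff_mk, Finset.sum_range_succ',
    Finset.sum_range_succ]
  have h0 : coeff (R := R) m (a (m + 1)) = 0 := X_pow_dvd_iff.mp (h (m + 1)) m (by omega)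
  rw [h0]
  ring

lemma psum_telescope (c : ℕ → PowerSeries R) (h : ∀ n, (X : PowerSeries R) ^ (n + 1) ∣ c n) :
    psum (fun n => c n - c (n + 1)) = c 0 := by
  ext m
  rw [psum, coeff_mk]
  simp_rw [map_sub]
  rw [Finset.sum_range_sub']
  have h0 : coeff (R := R) m (c (m + 1)) = 0 := X_pow_dvd_iff.mp (h (m + 1)) m (by omega)
  rw [h0, sub_zero]

lemma rescale_psum (r : R) (a : ℕ → PowerSeries R) :
    rescale r (psum a) = psum (fun n => rescale r (a n)) := by
  ext m
  simp [psum, Finset.mul_sum]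

lemma psum_congr {a b : ℕ → PowerSeries R} (h : ∀ n, a n = b n) : psum a = psum b := by
  simp only [funext h]

lemma inv_unique'' {a b c : PowerSeries R} (h1 : a * b = 1) (h2 : a * c = 1) : b = c := by
  calc b = b * (a * c) := by rw [h2, mul_one]
    _ = (a * b) * c := by ring
    _ = c := by rw [h1, one_mul]

end Psum

/-- The formal variable `q`, as an element of `ℚ[[q]]`. -/
noncomputable def qvar : PowerSeries ℚ := PowerSeries.X

/-- The `q`-Pochhammer factor `(tq;q)_n = ∏_{i=1}^{n} (1 − t q^i)`, as an element of
`ℚ[[q]][[t]]` (the outer variable `X` is `t`). -/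
noncomputable def tqPoch (n : ℕ) : PowerSeries (PowerSeries ℚ) :=
  ∏ i ∈ Finset.range n, (1 - PowerSeries.C (R := PowerSeries ℚ) (qvar ^ (i + 1)) * PowerSeries.X)

/-- `F(t) = Σ_{n≥0} t^n / (tq;q)_n` as an element of `ℚ[[q]][[t]]`. Each summand has
`t`-order `≥ n`, so the coefficient of `t^m` only involves summands with `n ≤ m`.
The inverse of `(tq;q)_n` (which has constant term `1`) is `invOfUnit _ 1`. -/
noncomputable def rogersFineF : PowerSeries (PowerSeries ℚ) :=
  PowerSeries.mk fun m =>
    ∑ n ∈ Finset.range (m + 1),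
      PowerSeries.coeff (R := PowerSeries ℚ) m
        (PowerSeries.X ^ n * PowerSeries.invOfUnit (tqPoch n) 1)

local notation "A" => PowerSeries ℚ

noncomputable def Ii (n : ℕ) : PowerSeries A := PowerSeries.invOfUnit (tqPoch n) 1

noncomputable def Jj : PowerSeries A :=
  PowerSeries.invOfUnit (1 - PowerSeries.C (R := A) qvar * PowerSeries.X) 1

lemma constCoeff_tqPoch (n : ℕ) : constantCoeff (R := A) (tqPoch n) = 1 := by
  rw [tqPoch, map_prod]
  refine Finset.prod_eq_one fun i _ => ?_
  simp

lemma tqPoch_mul_Ii (n : ℕ) : tqPoch n * Ii n = 1 :=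
  mul_invOfUnit _ 1 (by rw [constCoeff_tqPoch]; rfl)

lemma one_sub_mul_Jj : (1 - PowerSeries.C (R := A) qvar * PowerSeries.X) * Jj = 1 :=
  mul_invOfUnit _ 1 (by simp)

lemma Ii_zero : Ii 0 = 1 := by
  have h1 : tqPoch 0 * (1 : PowerSeries A) = 1 := by
    rw [tqPoch, Finset.range_zero, Finset.prod_empty, one_mul]
  exact inv_unique'' (tqPoch_mul_Ii 0) h1

lemma rescale_C' {R : Type*} [CommRing R] (a c : R) :
    rescale a (PowerSeries.C (R := R) c) = PowerSeries.C (R := R) c := by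
  ext n
  rcases n with _ | n <;> simp [PowerSeries.coeff_C]

lemma tqPoch_succ (n : ℕ) :
    tqPoch (n + 1) = tqPoch n * (1 - PowerSeries.C (R := A) (qvar ^ (n + 1)) * PowerSeries.X) := by
  rw [tqPoch, tqPoch, Finset.prod_range_succ]

lemma Ii_succ (n : ℕ) :
    Ii n = (1 - PowerSeries.C (R := A) (qvar ^ (n + 1)) * PowerSeries.X) * Ii (n + 1) := by
  refine inv_unique'' (tqPoch_mul_Ii n) ?_
  have := tqPoch_mul_Ii (n + 1)
  rw [tqPoch_succ] at this
  calc tqPoch n * ((1 - PowerSeries.C (R := A) (qvar ^ (n + 1)) * PowerSeries.X) * Ii (n + 1))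
      = tqPoch n * (1 - PowerSeries.C (R := A) (qvar ^ (n + 1)) * PowerSeries.X) * Ii (n + 1) := by ring
    _ = 1 := this

lemma rescale_tqPoch (n : ℕ) :
    (1 - PowerSeries.C (R := A) qvar * PowerSeries.X) * rescale qvar (tqPoch n) = tqPoch (n + 1) := by
  have hterm : ∀ i : ℕ, rescale qvar (1 - PowerSeries.C (R := A) (qvar ^ (i + 1)) * PowerSeries.X)
      = 1 - PowerSeries.C (R := A) (qvar ^ (i + 2)) * PowerSeries.X := by
    intro i
    rw [map_sub, map_one, map_mul, rescale_X, rescale_C',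
      show qvar ^ (i + 2) = qvar ^ (i + 1) * qvar from pow_succ _ _, map_mul]
    ring
  rw [tqPoch, map_prod]
  simp only [hterm]
  rw [tqPoch, Finset.prod_range_succ']
  simp only [zero_add, pow_one]
  rw [mul_comm]

lemma rescale_Ii (n : ℕ) :
    rescale qvar (Ii n) = (1 - PowerSeries.C (R := A) qvar * PowerSeries.X) * Ii (n + 1) := by
  have h1 : rescale qvar (tqPoch n) * rescale qvar (Ii n) = 1 := by
    rw [← map_mul, tqPoch_mul_Ii, map_one]
  have h2 : rescale qvar (tqPoch n) *
      ((1 - PowerSeries.C (R := A) qvar * PowerSeries.X) * Ii (n + 1)) = 1 := by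
    calc rescale qvar (tqPoch n) * ((1 - PowerSeries.C (R := A) qvar * PowerSeries.X) * Ii (n + 1))
        = ((1 - PowerSeries.C (R := A) qvar * PowerSeries.X) * rescale qvar (tqPoch n)) * Ii (n + 1) := by
          ring
      _ = tqPoch (n + 1) * Ii (n + 1) := by rw [rescale_tqPoch]
      _ = 1 := tqPoch_mul_Ii (n + 1)
  exact inv_unique'' h1 h2
lemma hF : rogersFineF = psum (fun n => PowerSeries.X ^ n * Ii n) := rfl

/-- The functional equation `(1−t)F(t) = 1 + (t²q/(1−tq)²)·(1−tq)·F(tq)`, equivalently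
`R(t) = 1 + (t²q/(1−tq)²)·R(tq)` where `R(t) = (1−t)F(t)`. Substitution `t ↦ tq` is
`rescale q`. -/
theorem rogersFine_functional_equation :
    (1 - PowerSeries.X) * rogersFineF =
      1 + PowerSeries.X ^ 2 * PowerSeries.C (R := PowerSeries ℚ) qvar *
        (PowerSeries.invOfUnit (1 - PowerSeries.C (R := PowerSeries ℚ) qvar * PowerSeries.X) 1) ^ 2 *
        ((1 - PowerSeries.C (R := PowerSeries ℚ) qvar * PowerSeries.X) *
          PowerSeries.rescale qvar rogersFineF) ∧
    (1 - PowerSeries.X) * rogersFineF =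
      1 + PowerSeries.X ^ 2 * PowerSeries.C (R := PowerSeries ℚ) qvar *
        (PowerSeries.invOfUnit (1 - PowerSeries.C (R := PowerSeries ℚ) qvar * PowerSeries.X) 1) ^ 2 *
        PowerSeries.rescale qvar ((1 - PowerSeries.X) * rogersFineF) := by
  set Cq := PowerSeries.C (R := PowerSeries ℚ)
  have hdvd : ∀ n : ℕ, (PowerSeries.X : PowerSeries (PowerSeries ℚ)) ^ n ∣
      PowerSeries.X ^ n * Ii n := fun n => dvd_mul_right _ _
  have key : (1 - PowerSeries.X) * rogersFineF
      = 1 + psum (fun n => PowerSeries.X ^ (n + 2) * Cq (qvar ^ (n + 1)) * Ii (n + 1)) := by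
    rw [hF, mul_psum _ _ hdvd]
    have hsplit : ∀ n : ℕ, (1 - PowerSeries.X) * (PowerSeries.X ^ n * Ii n)
        = (PowerSeries.X ^ n * (1 - PowerSeries.X - Cq (qvar ^ n) * PowerSeries.X) * Ii n)
          + (PowerSeries.X ^ (n + 1) * Cq (qvar ^ n) * Ii n) := by
      intro n; ring
    rw [psum_congr hsplit, psum_add]
    have hu : psum (fun n => PowerSeries.X ^ n *
        (1 - PowerSeries.X - Cq (qvar ^ n) * PowerSeries.X) * Ii n) = 1 - PowerSeries.X := by
      rw [psum_shift _ (fun n => ⟨(1 - PowerSeries.X - Cq (qvar ^ n) * PowerSeries.X) * Ii n,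
        by ring⟩)]
      have htel : psum (fun n => PowerSeries.X ^ (n + 1) *
          (1 - PowerSeries.X - Cq (qvar ^ (n + 1)) * PowerSeries.X) * Ii (n + 1))
          = PowerSeries.X * Ii 0 := by
        have hterm : ∀ n : ℕ, PowerSeries.X ^ (n + 1) *
            (1 - PowerSeries.X - Cq (qvar ^ (n + 1)) * PowerSeries.X) * Ii (n + 1)
            = (PowerSeries.X ^ (n + 1) * Ii n) - (PowerSeries.X ^ (n + 1 + 1) * Ii (n + 1)) := by
          intro n
          rw [Ii_succ n]
          ring
        rw [psum_congr hterm]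
        simpa using psum_telescope (fun n => PowerSeries.X ^ (n + 1) * Ii n)
          (fun n => dvd_mul_right _ _)
      rw [htel, Ii_zero]
      simp only [pow_zero, map_one]
      ring
    have he : psum (fun n => PowerSeries.X ^ (n + 1) * Cq (qvar ^ n) * Ii n)
        = PowerSeries.X + psum (fun n => PowerSeries.X ^ (n + 2) * Cq (qvar ^ (n + 1)) * Ii (n + 1)) := by
      rw [psum_shift _ (fun n => ⟨PowerSeries.X * Cq (qvar ^ n) * Ii n, by ring⟩)]
      have h0 : (PowerSeries.X : PowerSeries (PowerSeries ℚ)) ^ (0 + 1) * Cq (qvar ^ 0) * Ii 0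
          = PowerSeries.X := by
        rw [Ii_zero]; simp
      rw [h0]
    rw [hu, he]
    ring
  have hG2 : PowerSeries.X ^ 2 * Cq qvar * Jj ^ 2 *
      ((1 - Cq qvar * PowerSeries.X) * PowerSeries.rescale qvar rogersFineF)
      = psum (fun n => PowerSeries.X ^ (n + 2) * Cq (qvar ^ (n + 1)) * Ii (n + 1)) := by
    rw [hF, rescale_psum]
    have hterm : ∀ n : ℕ, PowerSeries.rescale qvar (PowerSeries.X ^ n * Ii n)
        = Cq (qvar ^ n) * PowerSeries.X ^ n * ((1 - Cq qvar * PowerSeries.X) * Ii (n + 1)) := by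
      intro n
      rw [map_mul, map_pow, rescale_X, rescale_Ii, mul_pow, ← map_pow]
    rw [psum_congr hterm,
      show PowerSeries.X ^ 2 * Cq qvar * Jj ^ 2 *
        ((1 - Cq qvar * PowerSeries.X) * psum (fun n => Cq (qvar ^ n) * PowerSeries.X ^ n *
          ((1 - Cq qvar * PowerSeries.X) * Ii (n + 1))))
        = (PowerSeries.X ^ 2 * Cq qvar * Jj ^ 2 * (1 - Cq qvar * PowerSeries.X)) *
          psum (fun n => Cq (qvar ^ n) * PowerSeries.X ^ n *
            ((1 - Cq qvar * PowerSeries.X) * Ii (n + 1))) from by ring,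
      mul_psum _ _ (fun n => ⟨Cq (qvar ^ n) * ((1 - Cq qvar * PowerSeries.X) * Ii (n + 1)),
        by ring⟩)]
    refine psum_congr fun n => ?_
    have hJ2 : ((1 - Cq qvar * PowerSeries.X) * Jj) ^ 2 = 1 := by
      rw [one_sub_mul_Jj, one_pow]
    rw [show qvar ^ (n + 1) = qvar ^ n * qvar from pow_succ _ _, map_mul]
    linear_combination (PowerSeries.X ^ (n + 2) * (Cq (qvar ^ n) * Cq qvar) * Ii (n + 1)) * hJ2
  have first : (1 - PowerSeries.X) * rogersFineF =
      1 + PowerSeries.X ^ 2 * Cq qvar * Jj ^ 2 *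
        ((1 - Cq qvar * PowerSeries.X) * PowerSeries.rescale qvar rogersFineF) := by
    rw [key, hG2]
  have hres : PowerSeries.rescale qvar ((1 - PowerSeries.X) * rogersFineF)
      = (1 - Cq qvar * PowerSeries.X) * PowerSeries.rescale qvar rogersFineF := by
    rw [map_mul, map_sub, map_one, rescale_X]
  exact ⟨first, by rw [hres]; exact first⟩
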